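/- Let g be an invertible symmetric real 4×4 matrix, let κ = *_g be its Hodge star medium tensor, and let ξ ∈ ℝ⁴ be a nonzero covector with g(ξ,ξ) = 0. Then the kernel of the linear map L_ξ : α ↦ ξ ∧ κ(ξ∧α) equals the g-orthogonal complement of ξ: ker L_ξ = {α ∈ ℝ⁴ : g(α,ξ) = 0}. -/

import Mathlib

open scoped BigOperators
open Matrix

noncomputable section

/-- The Levi-Civita symbol `ε_{ijkl}` on `{0,1,2,3}`. -/
def eps4 (i j k l : Fin 4) : ℝ :=
  (((j.val : ℝ) - (i.val : ℝ)) * ((k.val : ℝ) - (i.val : ℝ)) * ((l.val : ℝ) - (i.val : ℝ)) *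
      ((k.val : ℝ) - (j.val : ℝ)) * ((l.val : ℝ) - (j.val : ℝ)) * ((l.val : ℝ) - (k.val : ℝ))) / 12

/-- A 2-form on ℝ⁴: an antisymmetric array of components. -/
def IsAlt (u : Fin 4 → Fin 4 → ℝ) : Prop := ∀ i j, u i j = - u j i

/-- The components `κ i j k l = κ^{ij}_{kl}` form a medium tensor: antisymmetry in the
upper pair and in the lower pair. -/
def IsMedium (κ : Fin 4 → Fin 4 → Fin 4 → Fin 4 → ℝ) : Prop :=
  (∀ i j k l, κ i j k l = - κ j i k l) ∧ (∀ i j k l, κ i j k l = - κ i j l k)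

/-- Action of a medium tensor on a 2-form: `(κ F)_{ij} = ½ κ^{rs}_{ij} F_{rs}`. -/
def act (κ : Fin 4 → Fin 4 → Fin 4 → Fin 4 → ℝ) (F : Fin 4 → Fin 4 → ℝ) (i j : Fin 4) : ℝ :=
  (1 / 2) * ∑ r, ∑ s, κ r s i j * F r s

/-- Wedge pairing of two 2-forms: `u ∧ v = ¼ ε^{ijkl} u_{ij} v_{kl}`. -/
def wedge2 (u v : Fin 4 → Fin 4 → ℝ) : ℝ :=
  (1 / 4) * ∑ i, ∑ j, ∑ k, ∑ l, eps4 i j k l * u i j * v k l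

/-- A medium tensor is skewon-free if `u ∧ κ(v) = κ(u) ∧ v` for all 2-forms `u, v`. -/
def SkewonFree (κ : Fin 4 → Fin 4 → Fin 4 → Fin 4 → ℝ) : Prop :=
  ∀ u v, IsAlt u → IsAlt v → wedge2 u (act κ v) = wedge2 (act κ u) v

/-- Trace of a medium tensor: `½ κ^{ij}_{ij}`. -/
def mtrace (κ : Fin 4 → Fin 4 → Fin 4 → Fin 4 → ℝ) : ℝ := (1 / 2) * ∑ i, ∑ j, κ i j i j

/-- The (unsymmetrised) Tamm-Rubilar tensor density `𝒢₀^{ijkl}`. -/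
def TR0 (κ : Fin 4 → Fin 4 → Fin 4 → Fin 4 → ℝ) (i j k l : Fin 4) : ℝ :=
  (1 / 48) * ∑ a₁, ∑ a₂, ∑ a₃, ∑ a₄, ∑ b₁, ∑ b₂, ∑ b₃, ∑ b₄, ∑ b₅, ∑ b₆,
    κ a₁ a₂ b₁ b₂ * κ a₃ i b₃ b₄ * κ a₄ j b₅ b₆ *
      eps4 b₁ b₂ b₅ k * eps4 b₃ b₄ b₆ l * eps4 a₁ a₂ a₃ a₄

/-- The Tamm-Rubilar quartic form `𝒢_κ(ξ) = 𝒢₀^{ijkl} ξ_i ξ_j ξ_k ξ_l`. -/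
def TR (κ : Fin 4 → Fin 4 → Fin 4 → Fin 4 → ℝ) (ξ : Fin 4 → ℝ) : ℝ :=
  ∑ i, ∑ j, ∑ k, ∑ l, TR0 κ i j k l * ξ i * ξ j * ξ k * ξ l

/-- The Hodge star medium tensor of an invertible symmetric 4×4 matrix:
`(*_g)^{ij}_{rs} = √|det g| g^{ia} g^{jb} ε_{abrs}`. -/
def hodge (g : Matrix (Fin 4) (Fin 4) ℝ) (i j r s : Fin 4) : ℝ :=
  Real.sqrt |g.det| * ∑ a, ∑ b, g⁻¹ i a * g⁻¹ j b * eps4 a b r s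

/-- Lorentzian signature `(+---)` or `(-+++)` for a symmetric real 4×4 matrix. -/
def IsLorentzian (g : Matrix (Fin 4) (Fin 4) ℝ) : Prop :=
  ∃ P : Matrix (Fin 4) (Fin 4) ℝ, IsUnit P.det ∧
    (Pᵀ * g * P = Matrix.diagonal ![1, -1, -1, -1] ∨
      Pᵀ * g * P = Matrix.diagonal ![-1, 1, 1, 1])

/-- The 2-form `ξ ∧ α` of two covectors. -/
def wcov (ξ α : Fin 4 → ℝ) (i j : Fin 4) : ℝ := ξ i * α j - ξ j * α i

/-- The 3-form `L_ξ(α) = ξ ∧ κ(ξ ∧ α)`. -/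
def Lfun (κ : Fin 4 → Fin 4 → Fin 4 → Fin 4 → ℝ) (ξ α : Fin 4 → ℝ) (i j k : Fin 4) : ℝ :=
  ξ i * act κ (wcov ξ α) j k + ξ j * act κ (wcov ξ α) k i + ξ k * act κ (wcov ξ α) i j

/-- The metric evaluated on covectors: `g(ξ,η) = g^{ij} ξ_i η_j` (inverse matrix entries). -/
def gform (g : Matrix (Fin 4) (Fin 4) ℝ) (ξ η : Fin 4 → ℝ) : ℝ :=
  ∑ i, ∑ j, g⁻¹ i j * ξ i * η j

lemma fmk0 (h : 0 < 4) : (⟨0, h⟩ : Fin 4) = 0 := rfl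
lemma fmk1 (h : 1 < 4) : (⟨1, h⟩ : Fin 4) = 1 := rfl
lemma fmk2 (h : 2 < 4) : (⟨2, h⟩ : Fin 4) = 2 := rfl
lemma fmk3 (h : 3 < 4) : (⟨3, h⟩ : Fin 4) = 3 := rfl
lemma fv2' : ((2:Fin 4)).val = 2 := rfl
lemma fv3' : ((3:Fin 4)).val = 3 := rfl
lemma eps4e_0000 : eps4 0 0 0 0 = (0) := by norm_num [eps4, fv2', fv3']
lemma eps4e_0001 : eps4 0 0 0 1 = (0) := by norm_num [eps4, fv2', fv3']
lemma eps4e_0002 : eps4 0 0 0 2 = (0) := by norm_num [eps4, fv2', fv3']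
lemma eps4e_0003 : eps4 0 0 0 3 = (0) := by norm_num [eps4, fv2', fv3']
lemma eps4e_0010 : eps4 0 0 1 0 = (0) := by norm_num [eps4, fv2', fv3']
lemma eps4e_0011 : eps4 0 0 1 1 = (0) := by norm_num [eps4, fv2', fv3']
lemma eps4e_0012 : eps4 0 0 1 2 = (0) := by norm_num [eps4, fv2', fv3']
lemma eps4e_0013 : eps4 0 0 1 3 = (0) := by norm_num [eps4, fv2', fv3']
lemma eps4e_0020 : eps4 0 0 2 0 = (0) := by norm_num [eps4, fv2', fv3']
lemma eps4e_0021 : eps4 0 0 2 1 = (0) := by norm_num [eps4, fv2', fv3']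
lemma eps4e_0022 : eps4 0 0 2 2 = (0) := by norm_num [eps4, fv2', fv3']
lemma eps4e_0023 : eps4 0 0 2 3 = (0) := by norm_num [eps4, fv2', fv3']
lemma eps4e_0030 : eps4 0 0 3 0 = (0) := by norm_num [eps4, fv2', fv3']
lemma eps4e_0031 : eps4 0 0 3 1 = (0) := by norm_num [eps4, fv2', fv3']
lemma eps4e_0032 : eps4 0 0 3 2 = (0) := by norm_num [eps4, fv2', fv3']
lemma eps4e_0033 : eps4 0 0 3 3 = (0) := by norm_num [eps4, fv2', fv3']
lemma eps4e_0100 : eps4 0 1 0 0 = (0) := by norm_num [eps4, fv2', fv3']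
lemma eps4e_0101 : eps4 0 1 0 1 = (0) := by norm_num [eps4, fv2', fv3']
lemma eps4e_0102 : eps4 0 1 0 2 = (0) := by norm_num [eps4, fv2', fv3']
lemma eps4e_0103 : eps4 0 1 0 3 = (0) := by norm_num [eps4, fv2', fv3']
lemma eps4e_0110 : eps4 0 1 1 0 = (0) := by norm_num [eps4, fv2', fv3']
lemma eps4e_0111 : eps4 0 1 1 1 = (0) := by norm_num [eps4, fv2', fv3']
lemma eps4e_0112 : eps4 0 1 1 2 = (0) := by norm_num [eps4, fv2', fv3']
lemma eps4e_0113 : eps4 0 1 1 3 = (0) := by norm_num [eps4, fv2', fv3']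
lemma eps4e_0120 : eps4 0 1 2 0 = (0) := by norm_num [eps4, fv2', fv3']
lemma eps4e_0121 : eps4 0 1 2 1 = (0) := by norm_num [eps4, fv2', fv3']
lemma eps4e_0122 : eps4 0 1 2 2 = (0) := by norm_num [eps4, fv2', fv3']
lemma eps4e_0123 : eps4 0 1 2 3 = (1) := by norm_num [eps4, fv2', fv3']
lemma eps4e_0130 : eps4 0 1 3 0 = (0) := by norm_num [eps4, fv2', fv3']
lemma eps4e_0131 : eps4 0 1 3 1 = (0) := by norm_num [eps4, fv2', fv3']
lemma eps4e_0132 : eps4 0 1 3 2 = (-1) := by norm_num [eps4, fv2', fv3']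
lemma eps4e_0133 : eps4 0 1 3 3 = (0) := by norm_num [eps4, fv2', fv3']
lemma eps4e_0200 : eps4 0 2 0 0 = (0) := by norm_num [eps4, fv2', fv3']
lemma eps4e_0201 : eps4 0 2 0 1 = (0) := by norm_num [eps4, fv2', fv3']
lemma eps4e_0202 : eps4 0 2 0 2 = (0) := by norm_num [eps4, fv2', fv3']
lemma eps4e_0203 : eps4 0 2 0 3 = (0) := by norm_num [eps4, fv2', fv3']
lemma eps4e_0210 : eps4 0 2 1 0 = (0) := by norm_num [eps4, fv2', fv3']
lemma eps4e_0211 : eps4 0 2 1 1 = (0) := by norm_num [eps4, fv2', fv3']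
lemma eps4e_0212 : eps4 0 2 1 2 = (0) := by norm_num [eps4, fv2', fv3']
lemma eps4e_0213 : eps4 0 2 1 3 = (-1) := by norm_num [eps4, fv2', fv3']
lemma eps4e_0220 : eps4 0 2 2 0 = (0) := by norm_num [eps4, fv2', fv3']
lemma eps4e_0221 : eps4 0 2 2 1 = (0) := by norm_num [eps4, fv2', fv3']
lemma eps4e_0222 : eps4 0 2 2 2 = (0) := by norm_num [eps4, fv2', fv3']
lemma eps4e_0223 : eps4 0 2 2 3 = (0) := by norm_num [eps4, fv2', fv3']
lemma eps4e_0230 : eps4 0 2 3 0 = (0) := by norm_num [eps4, fv2', fv3']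
lemma eps4e_0231 : eps4 0 2 3 1 = (1) := by norm_num [eps4, fv2', fv3']
lemma eps4e_0232 : eps4 0 2 3 2 = (0) := by norm_num [eps4, fv2', fv3']
lemma eps4e_0233 : eps4 0 2 3 3 = (0) := by norm_num [eps4, fv2', fv3']
lemma eps4e_0300 : eps4 0 3 0 0 = (0) := by norm_num [eps4, fv2', fv3']
lemma eps4e_0301 : eps4 0 3 0 1 = (0) := by norm_num [eps4, fv2', fv3']
lemma eps4e_0302 : eps4 0 3 0 2 = (0) := by norm_num [eps4, fv2', fv3']
lemma eps4e_0303 : eps4 0 3 0 3 = (0) := by norm_num [eps4, fv2', fv3']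
lemma eps4e_0310 : eps4 0 3 1 0 = (0) := by norm_num [eps4, fv2', fv3']
lemma eps4e_0311 : eps4 0 3 1 1 = (0) := by norm_num [eps4, fv2', fv3']
lemma eps4e_0312 : eps4 0 3 1 2 = (1) := by norm_num [eps4, fv2', fv3']
lemma eps4e_0313 : eps4 0 3 1 3 = (0) := by norm_num [eps4, fv2', fv3']
lemma eps4e_0320 : eps4 0 3 2 0 = (0) := by norm_num [eps4, fv2', fv3']
lemma eps4e_0321 : eps4 0 3 2 1 = (-1) := by norm_num [eps4, fv2', fv3']
lemma eps4e_0322 : eps4 0 3 2 2 = (0) := by norm_num [eps4, fv2', fv3']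
lemma eps4e_0323 : eps4 0 3 2 3 = (0) := by norm_num [eps4, fv2', fv3']
lemma eps4e_0330 : eps4 0 3 3 0 = (0) := by norm_num [eps4, fv2', fv3']
lemma eps4e_0331 : eps4 0 3 3 1 = (0) := by norm_num [eps4, fv2', fv3']
lemma eps4e_0332 : eps4 0 3 3 2 = (0) := by norm_num [eps4, fv2', fv3']
lemma eps4e_0333 : eps4 0 3 3 3 = (0) := by norm_num [eps4, fv2', fv3']
lemma eps4e_1000 : eps4 1 0 0 0 = (0) := by norm_num [eps4, fv2', fv3']
lemma eps4e_1001 : eps4 1 0 0 1 = (0) := by norm_num [eps4, fv2', fv3']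
lemma eps4e_1002 : eps4 1 0 0 2 = (0) := by norm_num [eps4, fv2', fv3']
lemma eps4e_1003 : eps4 1 0 0 3 = (0) := by norm_num [eps4, fv2', fv3']
lemma eps4e_1010 : eps4 1 0 1 0 = (0) := by norm_num [eps4, fv2', fv3']
lemma eps4e_1011 : eps4 1 0 1 1 = (0) := by norm_num [eps4, fv2', fv3']
lemma eps4e_1012 : eps4 1 0 1 2 = (0) := by norm_num [eps4, fv2', fv3']
lemma eps4e_1013 : eps4 1 0 1 3 = (0) := by norm_num [eps4, fv2', fv3']
lemma eps4e_1020 : eps4 1 0 2 0 = (0) := by norm_num [eps4, fv2', fv3']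
lemma eps4e_1021 : eps4 1 0 2 1 = (0) := by norm_num [eps4, fv2', fv3']
lemma eps4e_1022 : eps4 1 0 2 2 = (0) := by norm_num [eps4, fv2', fv3']
lemma eps4e_1023 : eps4 1 0 2 3 = (-1) := by norm_num [eps4, fv2', fv3']
lemma eps4e_1030 : eps4 1 0 3 0 = (0) := by norm_num [eps4, fv2', fv3']
lemma eps4e_1031 : eps4 1 0 3 1 = (0) := by norm_num [eps4, fv2', fv3']
lemma eps4e_1032 : eps4 1 0 3 2 = (1) := by norm_num [eps4, fv2', fv3']
lemma eps4e_1033 : eps4 1 0 3 3 = (0) := by norm_num [eps4, fv2', fv3']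
lemma eps4e_1100 : eps4 1 1 0 0 = (0) := by norm_num [eps4, fv2', fv3']
lemma eps4e_1101 : eps4 1 1 0 1 = (0) := by norm_num [eps4, fv2', fv3']
lemma eps4e_1102 : eps4 1 1 0 2 = (0) := by norm_num [eps4, fv2', fv3']
lemma eps4e_1103 : eps4 1 1 0 3 = (0) := by norm_num [eps4, fv2', fv3']
lemma eps4e_1110 : eps4 1 1 1 0 = (0) := by norm_num [eps4, fv2', fv3']
lemma eps4e_1111 : eps4 1 1 1 1 = (0) := by norm_num [eps4, fv2', fv3']
lemma eps4e_1112 : eps4 1 1 1 2 = (0) := by norm_num [eps4, fv2', fv3']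
lemma eps4e_1113 : eps4 1 1 1 3 = (0) := by norm_num [eps4, fv2', fv3']
lemma eps4e_1120 : eps4 1 1 2 0 = (0) := by norm_num [eps4, fv2', fv3']
lemma eps4e_1121 : eps4 1 1 2 1 = (0) := by norm_num [eps4, fv2', fv3']
lemma eps4e_1122 : eps4 1 1 2 2 = (0) := by norm_num [eps4, fv2', fv3']
lemma eps4e_1123 : eps4 1 1 2 3 = (0) := by norm_num [eps4, fv2', fv3']
lemma eps4e_1130 : eps4 1 1 3 0 = (0) := by norm_num [eps4, fv2', fv3']
lemma eps4e_1131 : eps4 1 1 3 1 = (0) := by norm_num [eps4, fv2', fv3']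
lemma eps4e_1132 : eps4 1 1 3 2 = (0) := by norm_num [eps4, fv2', fv3']
lemma eps4e_1133 : eps4 1 1 3 3 = (0) := by norm_num [eps4, fv2', fv3']
lemma eps4e_1200 : eps4 1 2 0 0 = (0) := by norm_num [eps4, fv2', fv3']
lemma eps4e_1201 : eps4 1 2 0 1 = (0) := by norm_num [eps4, fv2', fv3']
lemma eps4e_1202 : eps4 1 2 0 2 = (0) := by norm_num [eps4, fv2', fv3']
lemma eps4e_1203 : eps4 1 2 0 3 = (1) := by norm_num [eps4, fv2', fv3']
lemma eps4e_1210 : eps4 1 2 1 0 = (0) := by norm_num [eps4, fv2', fv3']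
lemma eps4e_1211 : eps4 1 2 1 1 = (0) := by norm_num [eps4, fv2', fv3']
lemma eps4e_1212 : eps4 1 2 1 2 = (0) := by norm_num [eps4, fv2', fv3']
lemma eps4e_1213 : eps4 1 2 1 3 = (0) := by norm_num [eps4, fv2', fv3']
lemma eps4e_1220 : eps4 1 2 2 0 = (0) := by norm_num [eps4, fv2', fv3']
lemma eps4e_1221 : eps4 1 2 2 1 = (0) := by norm_num [eps4, fv2', fv3']
lemma eps4e_1222 : eps4 1 2 2 2 = (0) := by norm_num [eps4, fv2', fv3']
lemma eps4e_1223 : eps4 1 2 2 3 = (0) := by norm_num [eps4, fv2', fv3']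
lemma eps4e_1230 : eps4 1 2 3 0 = (-1) := by norm_num [eps4, fv2', fv3']
lemma eps4e_1231 : eps4 1 2 3 1 = (0) := by norm_num [eps4, fv2', fv3']
lemma eps4e_1232 : eps4 1 2 3 2 = (0) := by norm_num [eps4, fv2', fv3']
lemma eps4e_1233 : eps4 1 2 3 3 = (0) := by norm_num [eps4, fv2', fv3']
lemma eps4e_1300 : eps4 1 3 0 0 = (0) := by norm_num [eps4, fv2', fv3']
lemma eps4e_1301 : eps4 1 3 0 1 = (0) := by norm_num [eps4, fv2', fv3']
lemma eps4e_1302 : eps4 1 3 0 2 = (-1) := by norm_num [eps4, fv2', fv3']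
lemma eps4e_1303 : eps4 1 3 0 3 = (0) := by norm_num [eps4, fv2', fv3']
lemma eps4e_1310 : eps4 1 3 1 0 = (0) := by norm_num [eps4, fv2', fv3']
lemma eps4e_1311 : eps4 1 3 1 1 = (0) := by norm_num [eps4, fv2', fv3']
lemma eps4e_1312 : eps4 1 3 1 2 = (0) := by norm_num [eps4, fv2', fv3']
lemma eps4e_1313 : eps4 1 3 1 3 = (0) := by norm_num [eps4, fv2', fv3']
lemma eps4e_1320 : eps4 1 3 2 0 = (1) := by norm_num [eps4, fv2', fv3']
lemma eps4e_1321 : eps4 1 3 2 1 = (0) := by norm_num [eps4, fv2', fv3']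
lemma eps4e_1322 : eps4 1 3 2 2 = (0) := by norm_num [eps4, fv2', fv3']
lemma eps4e_1323 : eps4 1 3 2 3 = (0) := by norm_num [eps4, fv2', fv3']
lemma eps4e_1330 : eps4 1 3 3 0 = (0) := by norm_num [eps4, fv2', fv3']
lemma eps4e_1331 : eps4 1 3 3 1 = (0) := by norm_num [eps4, fv2', fv3']
lemma eps4e_1332 : eps4 1 3 3 2 = (0) := by norm_num [eps4, fv2', fv3']
lemma eps4e_1333 : eps4 1 3 3 3 = (0) := by norm_num [eps4, fv2', fv3']
lemma eps4e_2000 : eps4 2 0 0 0 = (0) := by norm_num [eps4, fv2', fv3']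
lemma eps4e_2001 : eps4 2 0 0 1 = (0) := by norm_num [eps4, fv2', fv3']
lemma eps4e_2002 : eps4 2 0 0 2 = (0) := by norm_num [eps4, fv2', fv3']
lemma eps4e_2003 : eps4 2 0 0 3 = (0) := by norm_num [eps4, fv2', fv3']
lemma eps4e_2010 : eps4 2 0 1 0 = (0) := by norm_num [eps4, fv2', fv3']
lemma eps4e_2011 : eps4 2 0 1 1 = (0) := by norm_num [eps4, fv2', fv3']
lemma eps4e_2012 : eps4 2 0 1 2 = (0) := by norm_num [eps4, fv2', fv3']
lemma eps4e_2013 : eps4 2 0 1 3 = (1) := by norm_num [eps4, fv2', fv3']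
lemma eps4e_2020 : eps4 2 0 2 0 = (0) := by norm_num [eps4, fv2', fv3']
lemma eps4e_2021 : eps4 2 0 2 1 = (0) := by norm_num [eps4, fv2', fv3']
lemma eps4e_2022 : eps4 2 0 2 2 = (0) := by norm_num [eps4, fv2', fv3']
lemma eps4e_2023 : eps4 2 0 2 3 = (0) := by norm_num [eps4, fv2', fv3']
lemma eps4e_2030 : eps4 2 0 3 0 = (0) := by norm_num [eps4, fv2', fv3']
lemma eps4e_2031 : eps4 2 0 3 1 = (-1) := by norm_num [eps4, fv2', fv3']
lemma eps4e_2032 : eps4 2 0 3 2 = (0) := by norm_num [eps4, fv2', fv3']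
lemma eps4e_2033 : eps4 2 0 3 3 = (0) := by norm_num [eps4, fv2', fv3']
lemma eps4e_2100 : eps4 2 1 0 0 = (0) := by norm_num [eps4, fv2', fv3']
lemma eps4e_2101 : eps4 2 1 0 1 = (0) := by norm_num [eps4, fv2', fv3']
lemma eps4e_2102 : eps4 2 1 0 2 = (0) := by norm_num [eps4, fv2', fv3']
lemma eps4e_2103 : eps4 2 1 0 3 = (-1) := by norm_num [eps4, fv2', fv3']
lemma eps4e_2110 : eps4 2 1 1 0 = (0) := by norm_num [eps4, fv2', fv3']
lemma eps4e_2111 : eps4 2 1 1 1 = (0) := by norm_num [eps4, fv2', fv3']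
lemma eps4e_2112 : eps4 2 1 1 2 = (0) := by norm_num [eps4, fv2', fv3']
lemma eps4e_2113 : eps4 2 1 1 3 = (0) := by norm_num [eps4, fv2', fv3']
lemma eps4e_2120 : eps4 2 1 2 0 = (0) := by norm_num [eps4, fv2', fv3']
lemma eps4e_2121 : eps4 2 1 2 1 = (0) := by norm_num [eps4, fv2', fv3']
lemma eps4e_2122 : eps4 2 1 2 2 = (0) := by norm_num [eps4, fv2', fv3']
lemma eps4e_2123 : eps4 2 1 2 3 = (0) := by norm_num [eps4, fv2', fv3']
lemma eps4e_2130 : eps4 2 1 3 0 = (1) := by norm_num [eps4, fv2', fv3']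
lemma eps4e_2131 : eps4 2 1 3 1 = (0) := by norm_num [eps4, fv2', fv3']
lemma eps4e_2132 : eps4 2 1 3 2 = (0) := by norm_num [eps4, fv2', fv3']
lemma eps4e_2133 : eps4 2 1 3 3 = (0) := by norm_num [eps4, fv2', fv3']
lemma eps4e_2200 : eps4 2 2 0 0 = (0) := by norm_num [eps4, fv2', fv3']
lemma eps4e_2201 : eps4 2 2 0 1 = (0) := by norm_num [eps4, fv2', fv3']
lemma eps4e_2202 : eps4 2 2 0 2 = (0) := by norm_num [eps4, fv2', fv3']
lemma eps4e_2203 : eps4 2 2 0 3 = (0) := by norm_num [eps4, fv2', fv3']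
lemma eps4e_2210 : eps4 2 2 1 0 = (0) := by norm_num [eps4, fv2', fv3']
lemma eps4e_2211 : eps4 2 2 1 1 = (0) := by norm_num [eps4, fv2', fv3']
lemma eps4e_2212 : eps4 2 2 1 2 = (0) := by norm_num [eps4, fv2', fv3']
lemma eps4e_2213 : eps4 2 2 1 3 = (0) := by norm_num [eps4, fv2', fv3']
lemma eps4e_2220 : eps4 2 2 2 0 = (0) := by norm_num [eps4, fv2', fv3']
lemma eps4e_2221 : eps4 2 2 2 1 = (0) := by norm_num [eps4, fv2', fv3']
lemma eps4e_2222 : eps4 2 2 2 2 = (0) := by norm_num [eps4, fv2', fv3']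
lemma eps4e_2223 : eps4 2 2 2 3 = (0) := by norm_num [eps4, fv2', fv3']
lemma eps4e_2230 : eps4 2 2 3 0 = (0) := by norm_num [eps4, fv2', fv3']
lemma eps4e_2231 : eps4 2 2 3 1 = (0) := by norm_num [eps4, fv2', fv3']
lemma eps4e_2232 : eps4 2 2 3 2 = (0) := by norm_num [eps4, fv2', fv3']
lemma eps4e_2233 : eps4 2 2 3 3 = (0) := by norm_num [eps4, fv2', fv3']
lemma eps4e_2300 : eps4 2 3 0 0 = (0) := by norm_num [eps4, fv2', fv3']
lemma eps4e_2301 : eps4 2 3 0 1 = (1) := by norm_num [eps4, fv2', fv3']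
lemma eps4e_2302 : eps4 2 3 0 2 = (0) := by norm_num [eps4, fv2', fv3']
lemma eps4e_2303 : eps4 2 3 0 3 = (0) := by norm_num [eps4, fv2', fv3']
lemma eps4e_2310 : eps4 2 3 1 0 = (-1) := by norm_num [eps4, fv2', fv3']
lemma eps4e_2311 : eps4 2 3 1 1 = (0) := by norm_num [eps4, fv2', fv3']
lemma eps4e_2312 : eps4 2 3 1 2 = (0) := by norm_num [eps4, fv2', fv3']
lemma eps4e_2313 : eps4 2 3 1 3 = (0) := by norm_num [eps4, fv2', fv3']
lemma eps4e_2320 : eps4 2 3 2 0 = (0) := by norm_num [eps4, fv2', fv3']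
lemma eps4e_2321 : eps4 2 3 2 1 = (0) := by norm_num [eps4, fv2', fv3']
lemma eps4e_2322 : eps4 2 3 2 2 = (0) := by norm_num [eps4, fv2', fv3']
lemma eps4e_2323 : eps4 2 3 2 3 = (0) := by norm_num [eps4, fv2', fv3']
lemma eps4e_2330 : eps4 2 3 3 0 = (0) := by norm_num [eps4, fv2', fv3']
lemma eps4e_2331 : eps4 2 3 3 1 = (0) := by norm_num [eps4, fv2', fv3']
lemma eps4e_2332 : eps4 2 3 3 2 = (0) := by norm_num [eps4, fv2', fv3']
lemma eps4e_2333 : eps4 2 3 3 3 = (0) := by norm_num [eps4, fv2', fv3']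
lemma eps4e_3000 : eps4 3 0 0 0 = (0) := by norm_num [eps4, fv2', fv3']
lemma eps4e_3001 : eps4 3 0 0 1 = (0) := by norm_num [eps4, fv2', fv3']
lemma eps4e_3002 : eps4 3 0 0 2 = (0) := by norm_num [eps4, fv2', fv3']
lemma eps4e_3003 : eps4 3 0 0 3 = (0) := by norm_num [eps4, fv2', fv3']
lemma eps4e_3010 : eps4 3 0 1 0 = (0) := by norm_num [eps4, fv2', fv3']
lemma eps4e_3011 : eps4 3 0 1 1 = (0) := by norm_num [eps4, fv2', fv3']
lemma eps4e_3012 : eps4 3 0 1 2 = (-1) := by norm_num [eps4, fv2', fv3']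
lemma eps4e_3013 : eps4 3 0 1 3 = (0) := by norm_num [eps4, fv2', fv3']
lemma eps4e_3020 : eps4 3 0 2 0 = (0) := by norm_num [eps4, fv2', fv3']
lemma eps4e_3021 : eps4 3 0 2 1 = (1) := by norm_num [eps4, fv2', fv3']
lemma eps4e_3022 : eps4 3 0 2 2 = (0) := by norm_num [eps4, fv2', fv3']
lemma eps4e_3023 : eps4 3 0 2 3 = (0) := by norm_num [eps4, fv2', fv3']
lemma eps4e_3030 : eps4 3 0 3 0 = (0) := by norm_num [eps4, fv2', fv3']
lemma eps4e_3031 : eps4 3 0 3 1 = (0) := by norm_num [eps4, fv2', fv3']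
lemma eps4e_3032 : eps4 3 0 3 2 = (0) := by norm_num [eps4, fv2', fv3']
lemma eps4e_3033 : eps4 3 0 3 3 = (0) := by norm_num [eps4, fv2', fv3']
lemma eps4e_3100 : eps4 3 1 0 0 = (0) := by norm_num [eps4, fv2', fv3']
lemma eps4e_3101 : eps4 3 1 0 1 = (0) := by norm_num [eps4, fv2', fv3']
lemma eps4e_3102 : eps4 3 1 0 2 = (1) := by norm_num [eps4, fv2', fv3']
lemma eps4e_3103 : eps4 3 1 0 3 = (0) := by norm_num [eps4, fv2', fv3']
lemma eps4e_3110 : eps4 3 1 1 0 = (0) := by norm_num [eps4, fv2', fv3']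
lemma eps4e_3111 : eps4 3 1 1 1 = (0) := by norm_num [eps4, fv2', fv3']
lemma eps4e_3112 : eps4 3 1 1 2 = (0) := by norm_num [eps4, fv2', fv3']
lemma eps4e_3113 : eps4 3 1 1 3 = (0) := by norm_num [eps4, fv2', fv3']
lemma eps4e_3120 : eps4 3 1 2 0 = (-1) := by norm_num [eps4, fv2', fv3']
lemma eps4e_3121 : eps4 3 1 2 1 = (0) := by norm_num [eps4, fv2', fv3']
lemma eps4e_3122 : eps4 3 1 2 2 = (0) := by norm_num [eps4, fv2', fv3']
lemma eps4e_3123 : eps4 3 1 2 3 = (0) := by norm_num [eps4, fv2', fv3']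
lemma eps4e_3130 : eps4 3 1 3 0 = (0) := by norm_num [eps4, fv2', fv3']
lemma eps4e_3131 : eps4 3 1 3 1 = (0) := by norm_num [eps4, fv2', fv3']
lemma eps4e_3132 : eps4 3 1 3 2 = (0) := by norm_num [eps4, fv2', fv3']
lemma eps4e_3133 : eps4 3 1 3 3 = (0) := by norm_num [eps4, fv2', fv3']
lemma eps4e_3200 : eps4 3 2 0 0 = (0) := by norm_num [eps4, fv2', fv3']
lemma eps4e_3201 : eps4 3 2 0 1 = (-1) := by norm_num [eps4, fv2', fv3']
lemma eps4e_3202 : eps4 3 2 0 2 = (0) := by norm_num [eps4, fv2', fv3']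
lemma eps4e_3203 : eps4 3 2 0 3 = (0) := by norm_num [eps4, fv2', fv3']
lemma eps4e_3210 : eps4 3 2 1 0 = (1) := by norm_num [eps4, fv2', fv3']
lemma eps4e_3211 : eps4 3 2 1 1 = (0) := by norm_num [eps4, fv2', fv3']
lemma eps4e_3212 : eps4 3 2 1 2 = (0) := by norm_num [eps4, fv2', fv3']
lemma eps4e_3213 : eps4 3 2 1 3 = (0) := by norm_num [eps4, fv2', fv3']
lemma eps4e_3220 : eps4 3 2 2 0 = (0) := by norm_num [eps4, fv2', fv3']
lemma eps4e_3221 : eps4 3 2 2 1 = (0) := by norm_num [eps4, fv2', fv3']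
lemma eps4e_3222 : eps4 3 2 2 2 = (0) := by norm_num [eps4, fv2', fv3']
lemma eps4e_3223 : eps4 3 2 2 3 = (0) := by norm_num [eps4, fv2', fv3']
lemma eps4e_3230 : eps4 3 2 3 0 = (0) := by norm_num [eps4, fv2', fv3']
lemma eps4e_3231 : eps4 3 2 3 1 = (0) := by norm_num [eps4, fv2', fv3']
lemma eps4e_3232 : eps4 3 2 3 2 = (0) := by norm_num [eps4, fv2', fv3']
lemma eps4e_3233 : eps4 3 2 3 3 = (0) := by norm_num [eps4, fv2', fv3']
lemma eps4e_3300 : eps4 3 3 0 0 = (0) := by norm_num [eps4, fv2', fv3']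
lemma eps4e_3301 : eps4 3 3 0 1 = (0) := by norm_num [eps4, fv2', fv3']
lemma eps4e_3302 : eps4 3 3 0 2 = (0) := by norm_num [eps4, fv2', fv3']
lemma eps4e_3303 : eps4 3 3 0 3 = (0) := by norm_num [eps4, fv2', fv3']
lemma eps4e_3310 : eps4 3 3 1 0 = (0) := by norm_num [eps4, fv2', fv3']
lemma eps4e_3311 : eps4 3 3 1 1 = (0) := by norm_num [eps4, fv2', fv3']
lemma eps4e_3312 : eps4 3 3 1 2 = (0) := by norm_num [eps4, fv2', fv3']
lemma eps4e_3313 : eps4 3 3 1 3 = (0) := by norm_num [eps4, fv2', fv3']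
lemma eps4e_3320 : eps4 3 3 2 0 = (0) := by norm_num [eps4, fv2', fv3']
lemma eps4e_3321 : eps4 3 3 2 1 = (0) := by norm_num [eps4, fv2', fv3']
lemma eps4e_3322 : eps4 3 3 2 2 = (0) := by norm_num [eps4, fv2', fv3']
lemma eps4e_3323 : eps4 3 3 2 3 = (0) := by norm_num [eps4, fv2', fv3']
lemma eps4e_3330 : eps4 3 3 3 0 = (0) := by norm_num [eps4, fv2', fv3']
lemma eps4e_3331 : eps4 3 3 3 1 = (0) := by norm_num [eps4, fv2', fv3']
lemma eps4e_3332 : eps4 3 3 3 2 = (0) := by norm_num [eps4, fv2', fv3']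
lemma eps4e_3333 : eps4 3 3 3 3 = (0) := by norm_num [eps4, fv2', fv3']

set_option maxHeartbeats 1000000 in
lemma eps_id' (u v ξ : Fin 4 → ℝ) (i j k : Fin 4) :
    ξ i * (∑ a, ∑ b, eps4 a b j k * u a * v b)
      + ξ j * (∑ a, ∑ b, eps4 a b k i * u a * v b)
      + ξ k * (∑ a, ∑ b, eps4 a b i j * u a * v b)
    = (∑ b, v b * ξ b) * (∑ a, eps4 a i j k * u a)
      - (∑ a, u a * ξ a) * (∑ b, eps4 b i j k * v b) := by
  fin_cases i <;> fin_cases j <;> fin_cases k <;>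
    · simp only [Fin.sum_univ_four, Fin.isValue, fmk0, fmk1, fmk2, fmk3, eps4e_0000, eps4e_0001, eps4e_0002, eps4e_0003, eps4e_0010, eps4e_0011, eps4e_0012, eps4e_0013, eps4e_0020, eps4e_0021, eps4e_0022, eps4e_0023, eps4e_0030, eps4e_0031, eps4e_0032, eps4e_0033, eps4e_0100, eps4e_0101, eps4e_0102, eps4e_0103, eps4e_0110, eps4e_0111, eps4e_0112, eps4e_0113, eps4e_0120, eps4e_0121, eps4e_0122, eps4e_0123, eps4e_0130, eps4e_0131, eps4e_0132, eps4e_0133, eps4e_0200, eps4e_0201, eps4e_0202, eps4e_0203, eps4e_0210, eps4e_0211, eps4e_0212, eps4e_0213, eps4e_0220, eps4e_0221, eps4e_0222, eps4e_0223, eps4e_0230, eps4e_0231, eps4e_0232, eps4e_0233, eps4e_0300, eps4e_0301, eps4e_0302, eps4e_0303, eps4e_0310, eps4e_0311, eps4e_0312, eps4e_0313, eps4e_0320, eps4e_0321, eps4e_0322, eps4e_0323, eps4e_0330, eps4e_0331, eps4e_0332, eps4e_0333, eps4e_1000, eps4e_1001, eps4e_1002, eps4e_1003, eps4e_1010, eps4e_1011,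 eps4e_1012, eps4e_1013, eps4e_1020, eps4e_1021, eps4e_1022, eps4e_1023, eps4e_1030, eps4e_1031, eps4e_1032, eps4e_1033, eps4e_1100, eps4e_1101, eps4e_1102, eps4e_1103, eps4e_1110, eps4e_1111, eps4e_1112, eps4e_1113, eps4e_1120, eps4e_1121, eps4e_1122, eps4e_1123, eps4e_1130, eps4e_1131, eps4e_1132, eps4e_1133, eps4e_1200, eps4e_1201, eps4e_1202, eps4e_1203, eps4e_1210, eps4e_1211, eps4e_1212, eps4e_1213, eps4e_1220, eps4e_1221, eps4e_1222, eps4e_1223, eps4e_1230, eps4e_1231, eps4e_1232, eps4e_1233, eps4e_1300, eps4e_1301, eps4e_1302, eps4e_1303, eps4e_1310, eps4e_1311, eps4e_1312, eps4e_1313, eps4e_1320, eps4e_1321, eps4e_1322, eps4e_1323, eps4e_1330, eps4e_1331, eps4e_1332, eps4e_1333, eps4e_2000, eps4e_2001, eps4e_2002, eps4e_2003, eps4e_2010, eps4e_2011, eps4e_2012, eps4e_2013, eps4e_2020, eps4e_2021, eps4e_2022, eps4e_2023, eps4e_2030, eps4e_2031, eps4e_2032, eps4e_2033, eps4e_2100,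 eps4e_2101, eps4e_2102, eps4e_2103, eps4e_2110, eps4e_2111, eps4e_2112, eps4e_2113, eps4e_2120, eps4e_2121, eps4e_2122, eps4e_2123, eps4e_2130, eps4e_2131, eps4e_2132, eps4e_2133, eps4e_2200, eps4e_2201, eps4e_2202, eps4e_2203, eps4e_2210, eps4e_2211, eps4e_2212, eps4e_2213, eps4e_2220, eps4e_2221, eps4e_2222, eps4e_2223, eps4e_2230, eps4e_2231, eps4e_2232, eps4e_2233, eps4e_2300, eps4e_2301, eps4e_2302, eps4e_2303, eps4e_2310, eps4e_2311, eps4e_2312, eps4e_2313, eps4e_2320, eps4e_2321, eps4e_2322, eps4e_2323, eps4e_2330, eps4e_2331, eps4e_2332, eps4e_2333, eps4e_3000, eps4e_3001, eps4e_3002, eps4e_3003, eps4e_3010, eps4e_3011, eps4e_3012, eps4e_3013, eps4e_3020, eps4e_3021, eps4e_3022, eps4e_3023, eps4e_3030, eps4e_3031, eps4e_3032, eps4e_3033, eps4e_3100, eps4e_3101, eps4e_3102, eps4e_3103, eps4e_3110, eps4e_3111, eps4e_3112, eps4e_3113, eps4e_3120, eps4e_3121, eps4e_3122, eps4e_3123,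 eps4e_3130, eps4e_3131, eps4e_3132, eps4e_3133, eps4e_3200, eps4e_3201, eps4e_3202, eps4e_3203, eps4e_3210, eps4e_3211, eps4e_3212, eps4e_3213, eps4e_3220, eps4e_3221, eps4e_3222, eps4e_3223, eps4e_3230, eps4e_3231, eps4e_3232, eps4e_3233, eps4e_3300, eps4e_3301, eps4e_3302, eps4e_3303, eps4e_3310, eps4e_3311, eps4e_3312, eps4e_3313, eps4e_3320, eps4e_3321, eps4e_3322, eps4e_3323, eps4e_3330, eps4e_3331, eps4e_3332, eps4e_3333]
      ring

set_option maxHeartbeats 2000000 in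
lemma act_hodge' (g : Matrix (Fin 4) (Fin 4) ℝ) (ξ α : Fin 4 → ℝ) (j k : Fin 4) :
    act (hodge g) (wcov ξ α) j k
      = Real.sqrt |g.det| *
          ∑ a, ∑ b, eps4 a b j k * (∑ r, g⁻¹ r a * ξ r) * (∑ r, g⁻¹ r b * α r) := by
  fin_cases j <;> fin_cases k <;>
    · simp only [act, hodge, wcov, Fin.sum_univ_four, Fin.isValue, fmk0, fmk1, fmk2, fmk3,
        eps4e_0000, eps4e_0001, eps4e_0002, eps4e_0003, eps4e_0010, eps4e_0011, eps4e_0012, eps4e_0013, eps4e_0020, eps4e_0021, eps4e_0022, eps4e_0023, eps4e_0030, eps4e_0031, eps4e_0032, eps4e_0033, eps4e_0100, eps4e_0101, eps4e_0102, eps4e_0103, eps4e_0110, eps4e_0111, eps4e_0112, eps4e_0113, eps4e_0120, eps4e_0121, eps4e_0122, eps4e_0123, eps4e_0130, eps4e_0131, eps4e_0132, eps4e_0133, eps4e_0200, eps4e_0201, eps4e_0202, eps4e_0203, eps4e_0210, eps4e_0211, eps4e_0212, eps4e_0213, eps4e_0220, eps4e_0221, eps4e_0222, eps4e_0223, eps4e_0230,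 eps4e_0231, eps4e_0232, eps4e_0233, eps4e_0300, eps4e_0301, eps4e_0302, eps4e_0303, eps4e_0310, eps4e_0311, eps4e_0312, eps4e_0313, eps4e_0320, eps4e_0321, eps4e_0322, eps4e_0323, eps4e_0330, eps4e_0331, eps4e_0332, eps4e_0333, eps4e_1000, eps4e_1001, eps4e_1002, eps4e_1003, eps4e_1010, eps4e_1011, eps4e_1012, eps4e_1013, eps4e_1020, eps4e_1021, eps4e_1022, eps4e_1023, eps4e_1030, eps4e_1031, eps4e_1032, eps4e_1033, eps4e_1100, eps4e_1101, eps4e_1102, eps4e_1103, eps4e_1110, eps4e_1111, eps4e_1112, eps4e_1113, eps4e_1120, eps4e_1121, eps4e_1122, eps4e_1123, eps4e_1130, eps4e_1131, eps4e_1132, eps4e_1133, eps4e_1200, eps4e_1201, eps4e_1202, eps4e_1203, eps4e_1210, eps4e_1211, eps4e_1212, eps4e_1213, eps4e_1220, eps4e_1221, eps4e_1222, eps4e_1223, eps4e_1230, eps4e_1231, eps4e_1232, eps4e_1233, eps4e_1300, eps4e_1301, eps4e_1302, eps4e_1303, eps4e_1310, eps4e_1311, eps4e_1312, eps4e_1313,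 eps4e_1320, eps4e_1321, eps4e_1322, eps4e_1323, eps4e_1330, eps4e_1331, eps4e_1332, eps4e_1333, eps4e_2000, eps4e_2001, eps4e_2002, eps4e_2003, eps4e_2010, eps4e_2011, eps4e_2012, eps4e_2013, eps4e_2020, eps4e_2021, eps4e_2022, eps4e_2023, eps4e_2030, eps4e_2031, eps4e_2032, eps4e_2033, eps4e_2100, eps4e_2101, eps4e_2102, eps4e_2103, eps4e_2110, eps4e_2111, eps4e_2112, eps4e_2113, eps4e_2120, eps4e_2121, eps4e_2122, eps4e_2123, eps4e_2130, eps4e_2131, eps4e_2132, eps4e_2133, eps4e_2200, eps4e_2201, eps4e_2202, eps4e_2203, eps4e_2210, eps4e_2211, eps4e_2212, eps4e_2213, eps4e_2220, eps4e_2221, eps4e_2222, eps4e_2223, eps4e_2230, eps4e_2231, eps4e_2232, eps4e_2233, eps4e_2300, eps4e_2301, eps4e_2302, eps4e_2303, eps4e_2310, eps4e_2311, eps4e_2312, eps4e_2313, eps4e_2320, eps4e_2321, eps4e_2322, eps4e_2323, eps4e_2330, eps4e_2331, eps4e_2332, eps4e_2333, eps4e_3000, eps4e_3001, eps4e_3002,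 eps4e_3003, eps4e_3010, eps4e_3011, eps4e_3012, eps4e_3013, eps4e_3020, eps4e_3021, eps4e_3022, eps4e_3023, eps4e_3030, eps4e_3031, eps4e_3032, eps4e_3033, eps4e_3100, eps4e_3101, eps4e_3102, eps4e_3103, eps4e_3110, eps4e_3111, eps4e_3112, eps4e_3113, eps4e_3120, eps4e_3121, eps4e_3122, eps4e_3123, eps4e_3130, eps4e_3131, eps4e_3132, eps4e_3133, eps4e_3200, eps4e_3201, eps4e_3202, eps4e_3203, eps4e_3210, eps4e_3211, eps4e_3212, eps4e_3213, eps4e_3220, eps4e_3221, eps4e_3222, eps4e_3223, eps4e_3230, eps4e_3231, eps4e_3232, eps4e_3233, eps4e_3300, eps4e_3301, eps4e_3302, eps4e_3303, eps4e_3310, eps4e_3311, eps4e_3312, eps4e_3313, eps4e_3320, eps4e_3321, eps4e_3322, eps4e_3323, eps4e_3330, eps4e_3331, eps4e_3332, eps4e_3333]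
      ring

lemma key_id' (g : Matrix (Fin 4) (Fin 4) ℝ) (ξ α : Fin 4 → ℝ) (i j k : Fin 4) :
    Lfun (hodge g) ξ α i j k = Real.sqrt |g.det| *
      (gform g α ξ * (∑ a, eps4 a i j k * (∑ r, g⁻¹ r a * ξ r))
        - gform g ξ ξ * (∑ a, eps4 a i j k * (∑ r, g⁻¹ r a * α r))) := by
  have hE := eps_id' (fun a => ∑ r, g⁻¹ r a * ξ r) (fun b => ∑ r, g⁻¹ r b * α r) ξ i j k
  have hg1 : gform g α ξ = ∑ b : Fin 4, (∑ r, g⁻¹ r b * α r) * ξ b := by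
    simp only [gform, Fin.sum_univ_four]; ring
  have hg2 : gform g ξ ξ = ∑ a : Fin 4, (∑ r, g⁻¹ r a * ξ r) * ξ a := by
    simp only [gform, Fin.sum_univ_four]; ring
  rw [Lfun, act_hodge', act_hodge', act_hodge', hg1, hg2]
  linear_combination Real.sqrt |g.det| * hE

/-- For the Hodge star medium tensor `κ = *_g` of an invertible symmetric `g`
and a nonzero null covector `ξ` (i.e. `g(ξ,ξ) = 0`), the kernel of
`L_ξ : α ↦ ξ ∧ κ(ξ ∧ α)` is the `g`-orthogonal complement of `ξ`. -/
theorem hodge_kernel_eq_orthogonal_complement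
    (g : Matrix (Fin 4) (Fin 4) ℝ) (hsymm : g.IsSymm) (hdet : IsUnit g.det)
    (ξ : Fin 4 → ℝ) (hξ : ξ ≠ 0) (hnull : gform g ξ ξ = 0) :
    {α : Fin 4 → ℝ | ∀ i j k, Lfun (hodge g) ξ α i j k = 0} =
      {α : Fin 4 → ℝ | gform g α ξ = 0} := by
  have hdne : g.det ≠ 0 := hdet.ne_zero
  have hs : Real.sqrt |g.det| ≠ 0 :=
    ne_of_gt (Real.sqrt_pos.mpr (abs_pos.mpr hdne))
  ext α
  simp only [Set.mem_setOf_eq]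
  constructor
  · intro hL
    by_contra hne
    have hB : ∀ i j k : Fin 4, (∑ a, eps4 a i j k * (∑ r, g⁻¹ r a * ξ r)) = 0 := by
      intro i j k
      have h := hL i j k
      rw [key_id', hnull] at h
      have h2 : gform g α ξ * (∑ a, eps4 a i j k * (∑ r, g⁻¹ r a * ξ r)) = 0 := by
        have := (mul_eq_zero.mp h).resolve_left hs
        linarith [this]
      exact (mul_eq_zero.mp h2).resolve_left hne
    have hv : ∀ a : Fin 4, (∑ r, g⁻¹ r a * ξ r) = 0 := by
      intro a
      fin_cases a
      · have := hB 1 2 3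
        simpa [Fin.sum_univ_four, eps4e_0123, eps4e_1123, eps4e_2123, eps4e_3123] using this
      · have := hB 0 2 3
        have h' : -(∑ r, g⁻¹ r 1 * ξ r) = 0 := by
          simpa [Fin.sum_univ_four, eps4e_0023, eps4e_1023, eps4e_2023, eps4e_3023] using this
        have h'' : (∑ r, g⁻¹ r 1 * ξ r) = 0 := by linarith
        exact h''
      · have := hB 0 1 3
        simpa [Fin.sum_univ_four, eps4e_0013, eps4e_1013, eps4e_2013, eps4e_3013] using this
      · have := hB 0 1 2
        have h' : -(∑ r, g⁻¹ r 3 * ξ r) = 0 := by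
          simpa [Fin.sum_univ_four, eps4e_0012, eps4e_1012, eps4e_2012, eps4e_3012] using this
        have h'' : (∑ r, g⁻¹ r 3 * ξ r) = 0 := by linarith
        exact h''
    have hz : (g⁻¹)ᵀ *ᵥ ξ = 0 := by
      funext a
      have := hv a
      simpa [Matrix.mulVec, dotProduct, Matrix.transpose_apply] using this
    have hξ0 : ξ = 0 := by
      have : gᵀ *ᵥ ((g⁻¹)ᵀ *ᵥ ξ) = ξ := by
        rw [Matrix.mulVec_mulVec, ← Matrix.transpose_mul, Matrix.nonsing_inv_mul g hdet,
          Matrix.transpose_one, Matrix.one_mulVec]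
      rw [hz, Matrix.mulVec_zero] at this
      exact this.symm
    exact hξ hξ0
  · intro h0 i j k
    rw [key_id', h0, hnull]
    ring

end
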